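/- For every pair of integers (g, k) with g ≥ 0 and 3 ≤ k, satisfying k ≤ 2g + 6 when g ≥ 2, and k ≤ 9 when g = 1, there exists a convex lattice polygon in ℤ² with exactly g interior lattice points and exactly k boundary lattice points. -/

import Mathlib

/-- The canonical embedding of `ℤ²` into `ℝ²`. -/
noncomputable def latticeEmbed (p : ℤ × ℤ) : ℝ × ℝ := ((p.1 : ℝ), (p.2 : ℝ))

lemma mem_of_seg {C : Set (ℝ×ℝ)} (hC : Convex ℝ C) {u v : ℝ×ℝ} (hu : u ∈ C) (hv : v ∈ C)
    {t : ℝ} (h0 : 0 ≤ t) (h1 : t ≤ 1) : (1-t) • u + t • v ∈ C :=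
  hC hu hv (by linarith) h0 (by ring)

lemma mem_of_between {C : Set (ℝ×ℝ)} (hC : Convex ℝ C) {x1 x2 x y : ℝ}
    (h1 : ((x1,y) : ℝ×ℝ) ∈ C) (h2 : ((x2,y) : ℝ×ℝ) ∈ C)
    (hx1 : x1 ≤ x) (hx2 : x ≤ x2) : ((x,y) : ℝ×ℝ) ∈ C := by
  rcases eq_or_lt_of_le (hx1.trans hx2) with h | h
  · have hx : x = x1 := le_antisymm (h ▸ hx2) hx1
    exact hx ▸ h1
  · set t := (x - x1)/(x2-x1) with ht
    have ht0 : 0 ≤ t := div_nonneg (by linarith) (by linarith)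
    have ht1 : t ≤ 1 := by rw [ht, div_le_one (by linarith)]; linarith
    have key : ((x,y) : ℝ×ℝ) = (1-t) • (x1,y) + t • (x2,y) := by
      have hne : x2 - x1 ≠ 0 := by linarith
      simp only [Prod.smul_mk, Prod.mk_add_mk, smul_eq_mul, Prod.mk.injEq, ht]
      constructor
      · field_simp; ring
      · ring
    exact key ▸ mem_of_seg hC h1 h2 ht0 ht1

lemma shift_mem_ball (p : ℝ×ℝ) (a b ε : ℝ) (ha : |a| < ε) (hb : |b| < ε) :
    ((p.1+a, p.2+b) : ℝ×ℝ) ∈ Metric.ball p ε := by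
  simp only [Metric.mem_ball, Prod.dist_eq, Real.dist_eq]
  apply max_lt <;> [skip; skip] <;> simpa using ‹_›

lemma pert {H : Set (ℝ×ℝ)} {p : ℝ×ℝ} {ε : ℝ} (hε : 0 < ε) (hb : Metric.ball p ε ⊆ H) :
    ((p.1 - ε/2, p.2) : ℝ×ℝ) ∈ H ∧ ((p.1 + ε/2, p.2) : ℝ×ℝ) ∈ H ∧
    ((p.1, p.2 - ε/2) : ℝ×ℝ) ∈ H ∧ ((p.1, p.2 + ε/2) : ℝ×ℝ) ∈ H := by
  have h0 : |(0:ℝ)| < ε := by simpa using hε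
  have hpos : |ε/2| < ε := by rw [abs_of_nonneg (by linarith)]; linarith
  have hneg : |(-(ε/2))| < ε := by rw [abs_neg]; exact hpos
  refine ⟨hb ?_, hb ?_, hb ?_, hb ?_⟩
  · simpa [sub_eq_add_neg] using shift_mem_ball p (-(ε/2)) 0 ε hneg h0
  · simpa using shift_mem_ball p (ε/2) 0 ε hpos h0
  · simpa [sub_eq_add_neg] using shift_mem_ball p 0 (-(ε/2)) ε h0 hneg
  · simpa using shift_mem_ball p 0 (ε/2) ε h0 hpos

/-! ### Family A : quadrilateral (0,1),(0,2),(m,0),(N,0) -/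

def SfinA (m N : ℤ) : Finset (ℤ×ℤ) := {(0,1),(0,2),(m,0),(N,0)}

def HA (m N : ℤ) : Set (ℝ×ℝ) :=
  {q : ℝ×ℝ | 0 ≤ q.1 ∧ 0 ≤ q.2 ∧ q.2 ≤ 2 ∧ (m:ℝ) ≤ q.1 + m * q.2 ∧ 2*q.1 + N*q.2 ≤ 2*N}

def SA (m N : ℤ) : Set (ℝ×ℝ) :=
  {q : ℝ×ℝ | 0 < q.1 ∧ 0 < q.2 ∧ q.2 < 2 ∧ (m:ℝ) < q.1 + m * q.2 ∧ 2*q.1 + N*q.2 < 2*N}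

lemma hullA (m N : ℤ) (hm : 0 ≤ m) (hmN : m ≤ N) (hN : 1 ≤ N) :
    convexHull ℝ (latticeEmbed '' ((SfinA m N : Finset (ℤ×ℤ)) : Set (ℤ×ℤ))) = HA m N := by
  have hm' : (0:ℝ) ≤ (m:ℝ) := by exact_mod_cast hm
  have hmN' : (m:ℝ) ≤ (N:ℝ) := by exact_mod_cast hmN
  have hN' : (1:ℝ) ≤ (N:ℝ) := by exact_mod_cast hN
  apply le_antisymm
  · apply convexHull_min
    · intro q hq
      simp only [SfinA, Finset.coe_insert, Finset.coe_singleton, Set.image_insert_eq,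
        Set.image_singleton, latticeEmbed] at hq
      simp only [Set.mem_insert_iff, Set.mem_singleton_iff] at hq
      rcases hq with h|h|h|h <;> subst h <;>
        · refine ⟨?_,?_,?_,?_,?_⟩ <;> · simp only [HA, Set.mem_setOf_eq]; push_cast; nlinarith
    · rintro ⟨px,py⟩ ⟨hp1,hp2,hp3,hp4,hp5⟩ ⟨qx,qy⟩ ⟨hq1,hq2,hq3,hq4,hq5⟩ a b ha hb hab
      simp only [HA, Set.mem_setOf_eq, Prod.smul_mk, Prod.mk_add_mk, smul_eq_mul] at *
      refine ⟨by nlinarith, by nlinarith, by nlinarith, by nlinarith, by nlinarith⟩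
  · rintro ⟨x,y⟩ ⟨h1,h2,h3,h4,h5⟩
    simp only [Set.mem_setOf_eq] at h1 h2 h3 h4 h5
    set C := convexHull ℝ (latticeEmbed '' ((SfinA m N : Finset (ℤ×ℤ)) : Set (ℤ×ℤ))) with hc
    have hC : Convex ℝ C := convex_convexHull ℝ _
    have hv : ∀ p ∈ ((SfinA m N : Finset (ℤ×ℤ)) : Set (ℤ×ℤ)), latticeEmbed p ∈ C :=
      fun p hp => subset_convexHull ℝ _ ⟨p, hp, rfl⟩
    have hA : ((0:ℝ),(1:ℝ)) ∈ C := by simpa [latticeEmbed] using hv (0,1) (by simp [SfinA])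
    have hB : ((0:ℝ),(2:ℝ)) ∈ C := by simpa [latticeEmbed] using hv (0,2) (by simp [SfinA])
    have hM : (((m:ℝ)),(0:ℝ)) ∈ C := by simpa [latticeEmbed] using hv (m,0) (by simp [SfinA])
    have hN2 : (((N:ℝ)),(0:ℝ)) ∈ C := by simpa [latticeEmbed] using hv (N,0) (by simp [SfinA])
    have hR : (((N:ℝ)*(2-y)/2, y) : ℝ×ℝ) ∈ C := by
      have := mem_of_seg hC hN2 hB (t := y/2) (by linarith) (by linarith)
      convert this using 2 <;>
        simp only [Prod.smul_mk, Prod.mk_add_mk, smul_eq_mul] <;> ring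
    rcases le_total y 1 with hy | hy
    · have hL : (((m:ℝ)*(1-y), y) : ℝ×ℝ) ∈ C := by
        have := mem_of_seg hC hM hA (t := y) h2 hy
        convert this using 2 <;>
          simp only [Prod.smul_mk, Prod.mk_add_mk, smul_eq_mul] <;> ring
      exact mem_of_between hC hL hR (by nlinarith) (by nlinarith)
    · have hL : (((0:ℝ), y) : ℝ×ℝ) ∈ C := by
        have := mem_of_seg hC hA hB (t := y-1) (by linarith) (by linarith)
        convert this using 2 <;>
          simp only [Prod.smul_mk, Prod.mk_add_mk, smul_eq_mul] <;> ring
      exact mem_of_between hC hL hR h1 (by nlinarith)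

lemma openSA (m N : ℤ) : IsOpen (SA m N) := by
  have h1 : IsOpen {q : ℝ×ℝ | 0 < q.1} := isOpen_lt continuous_const continuous_fst
  have h2 : IsOpen {q : ℝ×ℝ | 0 < q.2} := isOpen_lt continuous_const continuous_snd
  have h3 : IsOpen {q : ℝ×ℝ | q.2 < 2} := isOpen_lt continuous_snd continuous_const
  have h4 : IsOpen {q : ℝ×ℝ | (m:ℝ) < q.1 + m * q.2} :=
    isOpen_lt continuous_const (by fun_prop)
  have h5 : IsOpen {q : ℝ×ℝ | 2*q.1 + N*q.2 < 2*N} := isOpen_lt (by fun_prop) continuous_const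
  exact h1.inter (h2.inter (h3.inter (h4.inter h5)))

lemma intA (m N : ℤ) (hm : 0 ≤ m) (hmN : m ≤ N) (hN : 1 ≤ N) :
    interior (convexHull ℝ (latticeEmbed '' ((SfinA m N : Finset (ℤ×ℤ)) : Set (ℤ×ℤ)))) = SA m N := by
  rw [hullA m N hm hmN hN]
  apply subset_antisymm
  · intro p hp
    rw [mem_interior_iff_mem_nhds, Metric.mem_nhds_iff] at hp
    obtain ⟨ε, hε, hball⟩ := hp
    obtain ⟨h1,h2,h3,h4,h5⟩ := hball (Metric.mem_ball_self hε)
    obtain ⟨q1,q2,q3,q4⟩ := pert hε hball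
    obtain ⟨q11,-,-,q14,-⟩ := q1
    obtain ⟨-,-,-,-,q25⟩ := q2
    obtain ⟨-,q32,-,-,-⟩ := q3
    obtain ⟨-,-,q43,-,-⟩ := q4
    simp only [HA, Set.mem_setOf_eq] at *
    refine ⟨?_,?_,?_,?_,?_⟩
    · rcases h1.lt_or_eq with h|h
      · exact h
      · exfalso; linarith
    · rcases h2.lt_or_eq with h|h
      · exact h
      · exfalso; linarith
    · rcases h3.lt_or_eq with h|h
      · exact h
      · exfalso; linarith
    · rcases h4.lt_or_eq with h|h
      · exact h
      · exfalso; linarith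
    · rcases h5.lt_or_eq with h|h
      · exact h
      · exfalso; linarith
  · apply interior_maximal _ (openSA m N)
    rintro q ⟨a,b,c,d,e⟩
    exact ⟨a.le, b.le, c.le, d.le, e.le⟩

lemma frontA (m N : ℤ) (hm : 0 ≤ m) (hmN : m ≤ N) (hN : 1 ≤ N) :
    frontier (convexHull ℝ (latticeEmbed '' ((SfinA m N : Finset (ℤ×ℤ)) : Set (ℤ×ℤ)))) =
      HA m N \ SA m N := by
  have hcl : IsClosed (convexHull ℝ (latticeEmbed '' ((SfinA m N : Finset (ℤ×ℤ)) : Set (ℤ×ℤ)))) :=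
    (((SfinA m N).finite_toSet.image _).isCompact_convexHull (𝕜 := ℝ)).isClosed
  rw [hcl.frontier_eq, intA m N hm hmN hN, hullA m N hm hmN hN]


lemma castHA (m N x y : ℤ) : latticeEmbed (x,y) ∈ HA m N ↔
    (0 ≤ x ∧ 0 ≤ y ∧ y ≤ 2 ∧ m ≤ x + m*y ∧ 2*x + N*y ≤ 2*N) := by
  simp only [latticeEmbed, HA, Set.mem_setOf_eq]
  constructor
  · rintro ⟨a,b,c,d,e⟩
    exact ⟨by exact_mod_cast a, by exact_mod_cast b, by exact_mod_cast c,
      by exact_mod_cast d, by exact_mod_cast e⟩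
  · rintro ⟨a,b,c,d,e⟩
    exact ⟨by exact_mod_cast a, by exact_mod_cast b, by exact_mod_cast c,
      by exact_mod_cast d, by exact_mod_cast e⟩

lemma castSA (m N x y : ℤ) : latticeEmbed (x,y) ∈ SA m N ↔
    (0 < x ∧ 0 < y ∧ y < 2 ∧ m < x + m*y ∧ 2*x + N*y < 2*N) := by
  simp only [latticeEmbed, SA, Set.mem_setOf_eq]
  constructor
  · rintro ⟨a,b,c,d,e⟩
    exact ⟨by exact_mod_cast a, by exact_mod_cast b, by exact_mod_cast c,
      by exact_mod_cast d, by exact_mod_cast e⟩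
  · rintro ⟨a,b,c,d,e⟩
    exact ⟨by exact_mod_cast a, by exact_mod_cast b, by exact_mod_cast c,
      by exact_mod_cast d, by exact_mod_cast e⟩

lemma A_int_set (m N : ℤ) (hm : 0 ≤ m) :
    {p : ℤ×ℤ | latticeEmbed p ∈ SA m N} =
      ↑((Finset.Icc 1 ((N-1)/2)).image fun x => (x,(1:ℤ))) := by
  ext ⟨x,y⟩
  simp only [Set.mem_setOf_eq, castSA, Finset.coe_image, Set.mem_image, Finset.mem_coe,
    Finset.mem_Icc, Prod.mk.injEq]
  constructor
  · rintro ⟨a,b,c,d,e⟩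
    have hy : y = 1 := by omega
    subst hy
    exact ⟨x, by omega, rfl, rfl⟩
  · rintro ⟨x', ⟨hx1, hx2⟩, rfl, rfl⟩
    refine ⟨by omega, by omega, by omega, by omega, by omega⟩

lemma A_front_odd (m N : ℤ) (hm : 0 ≤ m) (hmN : m ≤ N) (hodd : ¬ (2 ∣ N)) :
    {p : ℤ×ℤ | latticeEmbed p ∈ HA m N \ SA m N} =
      ↑((Finset.Icc m N).image (fun x => (x,(0:ℤ))) ∪ {(0,1),(0,2)}) := by
  ext ⟨x,y⟩
  simp only [Set.mem_setOf_eq, Set.mem_diff, castHA, castSA, Finset.coe_union,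
    Set.mem_union, Finset.coe_image, Set.mem_image, Finset.mem_coe, Finset.mem_Icc,
    Prod.mk.injEq, Finset.coe_insert, Set.mem_insert_iff, Finset.coe_singleton,
    Set.mem_singleton_iff]
  constructor
  · rintro ⟨⟨a,b,c,d,e⟩, hn⟩
    interval_cases y
    · exact Or.inl ⟨x, by omega, rfl, rfl⟩
    · right
      have : x = 0 := by omega
      exact Or.inl ⟨this, rfl⟩
    · right; right
      exact ⟨by omega, rfl⟩
  · rintro (⟨x', ⟨h1,h2⟩, rfl, rfl⟩ | ⟨rfl, rfl⟩ | ⟨rfl, rfl⟩) <;>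
      refine ⟨⟨by omega, by omega, by omega, by omega, by omega⟩, by omega⟩

lemma A_front_even (m N : ℤ) (hm : 0 ≤ m) (hmN : m ≤ N) (hN : 2 ≤ N) (heven : 2 ∣ N) :
    {p : ℤ×ℤ | latticeEmbed p ∈ HA m N \ SA m N} =
      ↑((Finset.Icc m N).image (fun x => (x,(0:ℤ))) ∪ {(0,1),(0,2),(N/2,1)}) := by
  ext ⟨x,y⟩
  simp only [Set.mem_setOf_eq, Set.mem_diff, castHA, castSA, Finset.coe_union,
    Set.mem_union, Finset.coe_image, Set.mem_image, Finset.mem_coe, Finset.mem_Icc,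
    Prod.mk.injEq, Finset.coe_insert, Set.mem_insert_iff, Finset.coe_singleton,
    Set.mem_singleton_iff]
  constructor
  · rintro ⟨⟨a,b,c,d,e⟩, hn⟩
    interval_cases y
    · exact Or.inl ⟨x, by omega, rfl, rfl⟩
    · right
      rcases (by omega : x = 0 ∨ x = N/2) with h|h
      · exact Or.inl ⟨h, rfl⟩
      · exact Or.inr (Or.inr ⟨h, rfl⟩)
    · right; right; left
      exact ⟨by omega, rfl⟩
  · rintro (⟨x', ⟨h1,h2⟩, rfl, rfl⟩ | ⟨rfl, rfl⟩ | ⟨rfl, rfl⟩ | ⟨rfl, rfl⟩) <;>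
      refine ⟨⟨by omega, by omega, by omega, by omega, by omega⟩, by omega⟩


/-! ### Family B : triangle (0,0),(a,0),(0,b) -/

def SfinB (a b : ℤ) : Finset (ℤ×ℤ) := {(0,0),(a,0),(0,b)}

def HB (a b : ℤ) : Set (ℝ×ℝ) :=
  {q : ℝ×ℝ | 0 ≤ q.1 ∧ 0 ≤ q.2 ∧ b*q.1 + a*q.2 ≤ a*b}

def SB (a b : ℤ) : Set (ℝ×ℝ) :=
  {q : ℝ×ℝ | 0 < q.1 ∧ 0 < q.2 ∧ b*q.1 + a*q.2 < a*b}

lemma hullB (a b : ℤ) (ha : 1 ≤ a) (hb : 1 ≤ b) :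
    convexHull ℝ (latticeEmbed '' ((SfinB a b : Finset (ℤ×ℤ)) : Set (ℤ×ℤ))) = HB a b := by
  have ha' : (1:ℝ) ≤ (a:ℝ) := by exact_mod_cast ha
  have hb' : (1:ℝ) ≤ (b:ℝ) := by exact_mod_cast hb
  apply le_antisymm
  · apply convexHull_min
    · intro q hq
      simp only [SfinB, Finset.coe_insert, Finset.coe_singleton, Set.image_insert_eq,
        Set.image_singleton, latticeEmbed] at hq
      simp only [Set.mem_insert_iff, Set.mem_singleton_iff] at hq
      rcases hq with h|h|h <;> subst h <;>
        · refine ⟨?_,?_,?_⟩ <;> · simp only [HB, Set.mem_setOf_eq]; push_cast; nlinarith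
    · rintro ⟨px,py⟩ ⟨hp1,hp2,hp3⟩ ⟨qx,qy⟩ ⟨hq1,hq2,hq3⟩ s t hs htt hst
      simp only [HB, Set.mem_setOf_eq, Prod.smul_mk, Prod.mk_add_mk, smul_eq_mul] at *
      refine ⟨by nlinarith, by nlinarith, ?_⟩
      calc (b:ℝ) * (s * px + t * qx) + (a:ℝ) * (s * py + t * qy)
          = s*((b:ℝ)*px+(a:ℝ)*py) + t*((b:ℝ)*qx+(a:ℝ)*qy) := by ring
        _ ≤ s*((a:ℝ)*b) + t*((a:ℝ)*b) :=
            add_le_add (mul_le_mul_of_nonneg_left hp3 hs) (mul_le_mul_of_nonneg_left hq3 htt)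
        _ = (a:ℝ)*b := by rw [← add_mul, hst, one_mul]
  · rintro ⟨x,y⟩ ⟨h1,h2,h3⟩
    simp only [Set.mem_setOf_eq] at h1 h2 h3
    set C := convexHull ℝ (latticeEmbed '' ((SfinB a b : Finset (ℤ×ℤ)) : Set (ℤ×ℤ))) with hc
    have hC : Convex ℝ C := convex_convexHull ℝ _
    have hv : ∀ p ∈ ((SfinB a b : Finset (ℤ×ℤ)) : Set (ℤ×ℤ)), latticeEmbed p ∈ C :=
      fun p hp => subset_convexHull ℝ _ ⟨p, hp, rfl⟩
    have hO : ((0:ℝ),(0:ℝ)) ∈ C := by simpa [latticeEmbed] using hv (0,0) (by simp [SfinB])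
    have hA : (((a:ℝ)),(0:ℝ)) ∈ C := by simpa [latticeEmbed] using hv (a,0) (by simp [SfinB])
    have hBB : ((0:ℝ),((b:ℝ))) ∈ C := by simpa [latticeEmbed] using hv (0,b) (by simp [SfinB])
    have hb0 : (0:ℝ) < (b:ℝ) := by linarith
    have hyb : y ≤ (b:ℝ) := by nlinarith
    have ht0 : 0 ≤ y/b := div_nonneg h2 hb0.le
    have ht1 : y/b ≤ 1 := by rw [div_le_one hb0]; exact hyb
    have hL : (((0:ℝ), y) : ℝ×ℝ) ∈ C := by
      have := mem_of_seg hC hO hBB ht0 ht1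
      convert this using 2 <;> simp only [Prod.smul_mk, Prod.mk_add_mk, smul_eq_mul] <;>
        field_simp <;> ring
    have hR : (((a:ℝ)*((b:ℝ)-y)/b, y) : ℝ×ℝ) ∈ C := by
      have := mem_of_seg hC hA hBB ht0 ht1
      convert this using 2 <;> simp only [Prod.smul_mk, Prod.mk_add_mk, smul_eq_mul] <;>
        field_simp <;> ring
    refine mem_of_between hC hL hR h1 ?_
    rw [le_div_iff₀ hb0]; nlinarith

lemma openSB (a b : ℤ) : IsOpen (SB a b) := by
  have h1 : IsOpen {q : ℝ×ℝ | 0 < q.1} := isOpen_lt continuous_const continuous_fst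
  have h2 : IsOpen {q : ℝ×ℝ | 0 < q.2} := isOpen_lt continuous_const continuous_snd
  have h3 : IsOpen {q : ℝ×ℝ | (b:ℝ)*q.1 + a*q.2 < a*b} := isOpen_lt (by fun_prop) continuous_const
  exact h1.inter (h2.inter h3)



lemma intB (a b : ℤ) (ha : 1 ≤ a) (hb : 1 ≤ b) :
    interior (convexHull ℝ (latticeEmbed '' ((SfinB a b : Finset (ℤ×ℤ)) : Set (ℤ×ℤ)))) = SB a b := by
  have ha' : (1:ℝ) ≤ (a:ℝ) := by exact_mod_cast ha
  have hb' : (1:ℝ) ≤ (b:ℝ) := by exact_mod_cast hb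
  rw [hullB a b ha hb]
  apply subset_antisymm
  · intro p hp
    rw [mem_interior_iff_mem_nhds, Metric.mem_nhds_iff] at hp
    obtain ⟨ε, hε, hball⟩ := hp
    obtain ⟨h1,h2,h3⟩ := hball (Metric.mem_ball_self hε)
    obtain ⟨q1,q2,q3,q4⟩ := pert hε hball
    obtain ⟨q11,-,-⟩ := q1
    obtain ⟨-,-,q23⟩ := q2
    obtain ⟨-,q32,-⟩ := q3
    simp only [HB, SB, Set.mem_setOf_eq] at *
    refine ⟨?_,?_,?_⟩
    · rcases h1.lt_or_eq with h|h
      · exact h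
      · exfalso; linarith
    · rcases h2.lt_or_eq with h|h
      · exact h
      · exfalso; linarith
    · rcases h3.lt_or_eq with h|h
      · exact h
      · exfalso; nlinarith
  · apply interior_maximal _ (openSB a b)
    rintro q ⟨h1,h2,h3⟩
    exact ⟨h1.le, h2.le, h3.le⟩

lemma frontB (a b : ℤ) (ha : 1 ≤ a) (hb : 1 ≤ b) :
    frontier (convexHull ℝ (latticeEmbed '' ((SfinB a b : Finset (ℤ×ℤ)) : Set (ℤ×ℤ)))) =
      HB a b \ SB a b := by
  have hcl : IsClosed (convexHull ℝ (latticeEmbed '' ((SfinB a b : Finset (ℤ×ℤ)) : Set (ℤ×ℤ)))) :=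
    (((SfinB a b).finite_toSet.image _).isCompact_convexHull (𝕜 := ℝ)).isClosed
  rw [hcl.frontier_eq, intB a b ha hb, hullB a b ha hb]

lemma neB (a b : ℤ) (ha : 1 ≤ a) (hb : 1 ≤ b) : ((1/4 : ℝ), (1/4 : ℝ)) ∈ SB a b := by
  have ha' : (1:ℝ) ≤ (a:ℝ) := by exact_mod_cast ha
  have hb' : (1:ℝ) ≤ (b:ℝ) := by exact_mod_cast hb
  refine ⟨by norm_num, by norm_num, ?_⟩
  nlinarith [mul_le_mul ha' hb' (by linarith) (by linarith : (0:ℝ) ≤ (a:ℝ))]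

lemma castHB (a b x y : ℤ) : latticeEmbed (x,y) ∈ HB a b ↔
    (0 ≤ x ∧ 0 ≤ y ∧ b*x + a*y ≤ a*b) := by
  simp only [latticeEmbed, HB, Set.mem_setOf_eq]
  constructor
  · rintro ⟨h1,h2,h3⟩
    exact ⟨by exact_mod_cast h1, by exact_mod_cast h2, by exact_mod_cast h3⟩
  · rintro ⟨h1,h2,h3⟩
    exact ⟨by exact_mod_cast h1, by exact_mod_cast h2, by exact_mod_cast h3⟩

lemma castSB (a b x y : ℤ) : latticeEmbed (x,y) ∈ SB a b ↔
    (0 < x ∧ 0 < y ∧ b*x + a*y < a*b) := by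
  simp only [latticeEmbed, SB, Set.mem_setOf_eq]
  constructor
  · rintro ⟨h1,h2,h3⟩
    exact ⟨by exact_mod_cast h1, by exact_mod_cast h2, by exact_mod_cast h3⟩
  · rintro ⟨h1,h2,h3⟩
    exact ⟨by exact_mod_cast h1, by exact_mod_cast h2, by exact_mod_cast h3⟩


lemma B1_int (a : ℤ) (ha : 1 ≤ a) :
    {p : ℤ×ℤ | latticeEmbed p ∈ SB a 1} = (∅ : Set (ℤ×ℤ)) := by
  ext ⟨x,y⟩
  simp only [Set.mem_setOf_eq, castSB, Set.mem_empty_iff_false, iff_false, not_and]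
  intro h1 h2
  have h4 : a*1 ≤ a*y := mul_le_mul_of_nonneg_left (by omega) (by omega)
  omega

lemma B1_front (a : ℤ) (ha : 1 ≤ a) :
    {p : ℤ×ℤ | latticeEmbed p ∈ HB a 1 \ SB a 1} =
      ↑((Finset.Icc 0 a).image (fun x => (x,(0:ℤ))) ∪ {(0,1)}) := by
  ext ⟨x,y⟩
  simp only [Set.mem_setOf_eq, Set.mem_diff, castHB, castSB, Finset.coe_union,
    Set.mem_union, Finset.coe_image, Set.mem_image, Finset.mem_coe, Finset.mem_Icc,
    Prod.mk.injEq, Finset.coe_singleton, Set.mem_singleton_iff]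
  constructor
  · rintro ⟨⟨h1,h2,h3⟩, hn⟩
    rcases (by omega : y = 0 ∨ 1 ≤ y) with h|h
    · subst h
      exact Or.inl ⟨x, by omega, rfl, rfl⟩
    · have h4 : a*1 ≤ a*y := mul_le_mul_of_nonneg_left (by omega) (by omega)
      have hx : x = 0 := by omega
      have h6 : a*y ≤ a*1 := by omega
      have h5 : y ≤ 1 := le_of_mul_le_mul_left h6 (by omega)
      exact Or.inr ⟨hx, by omega⟩
  · rintro (⟨x', ⟨hx1,hx2⟩, rfl, rfl⟩ | ⟨rfl, rfl⟩) <;>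
      refine ⟨⟨by omega, by omega, by omega⟩, by omega⟩

lemma B3_int :
    {p : ℤ×ℤ | latticeEmbed p ∈ SB 3 3} = ↑({((1:ℤ),(1:ℤ))} : Finset (ℤ×ℤ)) := by
  ext ⟨x,y⟩
  simp only [Set.mem_setOf_eq, castSB, Finset.coe_singleton, Set.mem_singleton_iff,
    Prod.mk.injEq]
  omega

lemma B3_front :
    {p : ℤ×ℤ | latticeEmbed p ∈ HB 3 3 \ SB 3 3} =
      ↑({(0,0),(1,0),(2,0),(3,0),(0,1),(2,1),(0,2),(1,2),(0,3)} : Finset (ℤ×ℤ)) := by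
  ext ⟨x,y⟩
  simp only [Set.mem_setOf_eq, Set.mem_diff, castHB, castSB, Finset.coe_insert,
    Set.mem_insert_iff, Finset.coe_singleton, Set.mem_singleton_iff, Prod.mk.injEq]
  omega
lemma neA (m N : ℤ) (hm : 0 ≤ m) (hmN : m ≤ N) (hN : 1 ≤ N) :
    (((N:ℝ)/2, (3/4 : ℝ)) : ℝ×ℝ) ∈ SA m N := by
  have hm' : (0:ℝ) ≤ (m:ℝ) := by exact_mod_cast hm
  have hmN' : (m:ℝ) ≤ (N:ℝ) := by exact_mod_cast hmN
  have hN' : (1:ℝ) ≤ (N:ℝ) := by exact_mod_cast hN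
  refine ⟨by simp only; linarith, by norm_num, by norm_num, ?_, ?_⟩ <;>
    · simp only; nlinarith

lemma pair_disj (m N : ℤ) :
    Disjoint ((Finset.Icc m N).image (fun x => (x,(0:ℤ)))) ({(0,1),(0,2)} : Finset (ℤ×ℤ)) := by
  rw [Finset.disjoint_left]
  rintro ⟨x,y⟩ ha hb
  simp only [Finset.mem_image, Finset.mem_Icc, Prod.mk.injEq, Finset.mem_insert,
    Finset.mem_singleton] at ha hb
  obtain ⟨x', -, -, h⟩ := ha
  rcases hb with ⟨-, h2⟩ | ⟨-, h2⟩ <;> omega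

lemma triple_disj (m N : ℤ) (hN : 2 ≤ N) :
    Disjoint ((Finset.Icc m N).image (fun x => (x,(0:ℤ)))) ({(0,1),(0,2),(N/2,1)} : Finset (ℤ×ℤ)) := by
  rw [Finset.disjoint_left]
  rintro ⟨x,y⟩ ha hb
  simp only [Finset.mem_image, Finset.mem_Icc, Prod.mk.injEq, Finset.mem_insert,
    Finset.mem_singleton] at ha hb
  obtain ⟨x', -, -, h⟩ := ha
  rcases hb with ⟨-, h2⟩ | ⟨-, h2⟩ | ⟨-, h2⟩ <;> omega

lemma inj1 : Function.Injective (fun x : ℤ => (x,(1:ℤ))) := by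
  intro a b h; simpa using h

lemma inj0 : Function.Injective (fun x : ℤ => (x,(0:ℤ))) := by
  intro a b h; simpa using h

/-- Scott's realization theorem: for every pair `(g, k)` with
`k ≥ 3`, `k ≤ 2g + 6` when `g ≥ 2`, and `k ≤ 9` when `g = 1`, there is a convex
lattice polygon (the convex hull of finitely many lattice points, with nonempty
interior) having exactly `g` interior lattice points and exactly `k` boundary
lattice points. -/
theorem stmt9 (g k : ℕ) (hk : 3 ≤ k)
    (hg2 : 2 ≤ g → k ≤ 2 * g + 6) (hg1 : g = 1 → k ≤ 9) :
    ∃ S : Finset (ℤ × ℤ),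
      (interior (convexHull ℝ (latticeEmbed '' (S : Set (ℤ × ℤ))))).Nonempty ∧
      {p : ℤ × ℤ | latticeEmbed p ∈
        interior (convexHull ℝ (latticeEmbed '' (S : Set (ℤ × ℤ))))}.ncard = g ∧
      {p : ℤ × ℤ | latticeEmbed p ∈
        frontier (convexHull ℝ (latticeEmbed '' (S : Set (ℤ × ℤ))))}.ncard = k := by
  rcases Nat.eq_zero_or_pos g with hg | hgpos
  · -- g = 0 : flat triangle, B ((k:ℤ)-2) 1
    subst hg
    have ha : (1:ℤ) ≤ (k:ℤ)-2 := by omega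
    refine ⟨SfinB ((k:ℤ)-2) 1, ?_, ?_, ?_⟩
    · rw [intB _ _ ha le_rfl]
      exact ⟨_, neB _ _ ha le_rfl⟩
    · rw [intB _ _ ha le_rfl, B1_int _ ha]
      simp
    · rw [frontB _ _ ha le_rfl, B1_front _ ha, Set.ncard_coe_finset,
        Finset.card_union_of_disjoint, Finset.card_image_of_injective _ inj0,
        Int.card_Icc]
      · simp only [Finset.card_singleton]
        omega
      · rw [Finset.disjoint_left]
        rintro ⟨x,y⟩ ha' hb'
        simp only [Finset.mem_image, Finset.mem_Icc, Prod.mk.injEq,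
          Finset.mem_singleton] at ha' hb'
        obtain ⟨x', -, -, h⟩ := ha'
        omega
  · by_cases hk3 : k ≤ 2*g + 3
    · -- family A with N odd
      set m : ℤ := 2*(g:ℤ)+4-(k:ℤ) with hmdef
      set N : ℤ := 2*(g:ℤ)+1 with hNdef
      have hm : 0 ≤ m := by omega
      have hmN : m ≤ N := by omega
      have hN : 1 ≤ N := by omega
      refine ⟨SfinA m N, ?_, ?_, ?_⟩
      · rw [intA m N hm hmN hN]
        exact ⟨_, neA m N hm hmN hN⟩
      · rw [intA m N hm hmN hN, A_int_set m N hm, Set.ncard_coe_finset,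
          Finset.card_image_of_injective _ inj1, Int.card_Icc]
        omega
      · rw [frontA m N hm hmN hN]
        have : {p : ℤ×ℤ | latticeEmbed p ∈ HA m N \ SA m N} =
            ↑((Finset.Icc m N).image (fun x => (x,(0:ℤ))) ∪ {(0,1),(0,2)}) :=
          A_front_odd m N hm hmN (by omega)
        rw [this, Set.ncard_coe_finset, Finset.card_union_of_disjoint (pair_disj m N),
          Finset.card_image_of_injective _ inj0, Int.card_Icc]
        have hc : ({(0,1),(0,2)} : Finset (ℤ×ℤ)).card = 2 := by decide
        omega
    · by_cases hk6 : k ≤ 2*g + 6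
      · -- family A with N even
        set m : ℤ := 2*(g:ℤ)+6-(k:ℤ) with hmdef
        set N : ℤ := 2*(g:ℤ)+2 with hNdef
        have hm : 0 ≤ m := by omega
        have hmN : m ≤ N := by omega
        have hN : 1 ≤ N := by omega
        refine ⟨SfinA m N, ?_, ?_, ?_⟩
        · rw [intA m N hm hmN hN]
          exact ⟨_, neA m N hm hmN hN⟩
        · rw [intA m N hm hmN hN, A_int_set m N hm, Set.ncard_coe_finset,
            Finset.card_image_of_injective _ inj1, Int.card_Icc]
          omega
        · rw [frontA m N hm hmN hN]
          have : {p : ℤ×ℤ | latticeEmbed p ∈ HA m N \ SA m N} =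
              ↑((Finset.Icc m N).image (fun x => (x,(0:ℤ))) ∪ {(0,1),(0,2),(N/2,1)}) :=
            A_front_even m N hm hmN (by omega) ⟨(g:ℤ)+1, by omega⟩
          rw [this, Set.ncard_coe_finset,
            Finset.card_union_of_disjoint (triple_disj m N (by omega)),
            Finset.card_image_of_injective _ inj0, Int.card_Icc]
          have hc : ({(0,1),(0,2),(N/2,1)} : Finset (ℤ×ℤ)).card = 3 := by
            rw [Finset.card_insert_of_notMem, Finset.card_insert_of_notMem,
              Finset.card_singleton]
            · simp only [Finset.mem_singleton, Prod.mk.injEq, not_and]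
              omega
            · simp only [Finset.mem_insert, Finset.mem_singleton, Prod.mk.injEq, not_or, not_and]
              constructor
              · omega
              · omega
          omega
      · -- g = 1, k = 9 : triangle (0,0),(3,0),(0,3)
        have hg1' : g = 1 := by
          by_contra h
          have : 2 ≤ g := by omega
          exact hk6 (hg2 this)
        have hk9 : k = 9 := by
          have := hg1 hg1'
          omega
        subst hg1'; subst hk9
        refine ⟨SfinB 3 3, ?_, ?_, ?_⟩
        · rw [intB 3 3 (by norm_num) (by norm_num)]
          exact ⟨_, neB 3 3 (by norm_num) (by norm_num)⟩
        · rw [intB 3 3 (by norm_num) (by norm_num), B3_int, Set.ncard_coe_finset]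
          rfl
        · rw [frontB 3 3 (by norm_num) (by norm_num), B3_front, Set.ncard_coe_finset]
          rfl
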